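/- Let ρ be a finite positive Borel measure on [0,∞) and define g(r) = ∫_{[0,∞)} r(s²+1)/(r−s)² dρ(s) ∈ [0,∞] for r > 0. If I is an open interval with closure contained in (0,∞) on which g is bounded, then ρ(I) = 0 and g is convex on I; if moreover ρ ≠ 0, then g is strictly convex on I. -/

import Mathlib

open MeasureTheory Filter ENNReal

/-- g(r) = ∫ r(s²+1)/(r−s)² dρ(s), with values in [0,∞]. -/
noncomputable def gfun (ρ : Measure ℝ) (r : ℝ) : ℝ≥0∞ :=
  ∫⁻ s : ℝ, ENNReal.ofReal (r * (s ^ 2 + 1)) / ENNReal.ofReal ((r - s) ^ 2) ∂ρ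

lemma aux_strictConvex {c d : ℝ} (hc : 0 < c) {s : ℝ} (hs : 0 ≤ s) (hsI : s ∉ Set.Ioo c d) :
    StrictConvexOn ℝ (Set.Ioo c d) (fun r => r * (s ^ 2 + 1) / (r - s) ^ 2) := by
  have hne : ∀ r ∈ Set.Ioo c d, r ≠ s := fun r hr h => hsI (h ▸ hr)
  set f1 : ℝ → ℝ := fun r => -((s ^ 2 + 1) * (r + s)) / (r - s) ^ 3 with hf1
  set f2 : ℝ → ℝ := fun r => (s ^ 2 + 1) * (2 * r + 4 * s) / (r - s) ^ 4 with hf2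
  have hd1 : ∀ r : ℝ, r ≠ s → HasDerivAt (fun r => r * (s ^ 2 + 1) / (r - s) ^ 2) (f1 r) r := by
    intro r hrs
    have hsub : r - s ≠ 0 := sub_ne_zero.mpr hrs
    have h := ((hasDerivAt_id r).mul_const (s ^ 2 + 1)).fun_div
      (((hasDerivAt_id r).sub_const s).fun_pow 2) (pow_ne_zero 2 hsub)
    refine h.congr_deriv ?_
    simp only [hf1, id, Pi.neg_apply]
    field_simp
    ring
  have hd2 : ∀ r : ℝ, r ≠ s → HasDerivAt f1 (f2 r) r := by
    intro r hrs
    have hsub : r - s ≠ 0 := sub_ne_zero.mpr hrs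
    have h := ((((hasDerivAt_id r).add_const s).const_mul (s ^ 2 + 1)).neg).fun_div
      (((hasDerivAt_id r).sub_const s).fun_pow 3) (pow_ne_zero 3 hsub)
    refine h.congr_deriv ?_
    simp only [hf2, id, Pi.neg_apply]
    field_simp
    ring
  apply strictConvexOn_of_deriv2_pos (convex_Ioo c d)
  · intro r hr
    exact ((hd1 r (hne r hr)).differentiableAt).continuousAt.continuousWithinAt
  · intro r hr
    rw [interior_Ioo] at hr
    have hrs := hne r hr
    have hopen : {x : ℝ | x ≠ s} ∈ nhds r := isOpen_ne.mem_nhds hrs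
    have hEq : deriv (fun r => r * (s ^ 2 + 1) / (r - s) ^ 2) =ᶠ[nhds r] f1 := by
      filter_upwards [hopen] with x hx
      exact (hd1 x hx).deriv
    have : deriv^[2] (fun r => r * (s ^ 2 + 1) / (r - s) ^ 2) r
        = deriv f1 r := by
      simp only [Function.iterate_succ, Function.iterate_zero, Function.comp_apply, id]
      exact Filter.EventuallyEq.deriv_eq hEq
    rw [this, (hd2 r hrs).deriv]
    have h1 : 0 < r := hc.trans hr.1
    have hsub : r - s ≠ 0 := sub_ne_zero.mpr hrs
    have h4 : (0:ℝ) < (r - s) ^ 4 := by positivity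
    have h5 : (0:ℝ) < 2 * r + 4 * s := by linarith
    exact div_pos (mul_pos (by positivity) h5) h4

lemma gfun_part1 (ρ : Measure ℝ) [IsFiniteMeasure ρ] {c d : ℝ} (hc : 0 < c)
    {M : ℝ} (hM : ∀ r ∈ Set.Ioo c d, gfun ρ r ≤ ENNReal.ofReal M) :
    ρ (Set.Ioo c d) = 0 := by
  by_contra hpos
  have hcd : c < d := by
    by_contra h
    rw [Set.Ioo_eq_empty h] at hpos
    exact hpos (measure_empty)
  set G : ℝ → ℝ → ℝ≥0∞ :=
    fun r s => ENNReal.ofReal (r * (s ^ 2 + 1)) / ENNReal.ofReal ((r - s) ^ 2) with hG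
  have hmeasG : Measurable (Function.uncurry G) := by
    apply Measurable.div
    · exact (measurable_fst.mul
        ((measurable_snd.pow_const 2).add_const 1)).ennreal_ofReal
    · exact ((measurable_fst.sub measurable_snd).pow_const 2).ennreal_ofReal
  -- inner integral diverges for s ∈ Ioo c d
  have key : ∀ s ∈ Set.Ioo c d, ∫⁻ r in Set.Ioo c d, G r s ∂volume = ⊤ := by
    intro s hs
    set x := ∫⁻ r in Set.Ioo c d, G r s ∂volume with hx
    have hb : ∀ b : ℝ, 0 < b → s + b ≤ d → ENNReal.ofReal (c / b) ≤ x := by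
      intro b hb0 hbd
      have hsub : Set.Ioo s (s + b) ⊆ Set.Ioo c d :=
        Set.Ioo_subset_Ioo (le_of_lt hs.1) hbd
      have step1 : ENNReal.ofReal (c / b)
          = (ENNReal.ofReal c / ENNReal.ofReal (b ^ 2)) * ENNReal.ofReal b := by
        rw [← ENNReal.ofReal_div_of_pos (by positivity), ← ENNReal.ofReal_mul (by positivity)]
        congr 1
        field_simp
      have step2 : (ENNReal.ofReal c / ENNReal.ofReal (b ^ 2)) * ENNReal.ofReal b
          = ∫⁻ _ in Set.Ioo s (s + b), (ENNReal.ofReal c / ENNReal.ofReal (b ^ 2)) ∂volume := by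
        rw [setLIntegral_const, Real.volume_Ioo]
        congr 1
        ring_nf
      have step3 : (∫⁻ _ in Set.Ioo s (s + b), (ENNReal.ofReal c / ENNReal.ofReal (b ^ 2)) ∂volume)
          ≤ ∫⁻ r in Set.Ioo s (s + b), G r s ∂volume := by
        apply setLIntegral_mono' measurableSet_Ioo
        intro r hr
        apply ENNReal.div_le_div
        · apply ENNReal.ofReal_le_ofReal
          have h1 : c < r := lt_trans hs.1 hr.1
          nlinarith [sq_nonneg s]
        · apply ENNReal.ofReal_le_ofReal
          nlinarith [hr.1, hr.2]
      calc ENNReal.ofReal (c / b) ≤ ∫⁻ r in Set.Ioo s (s + b), G r s ∂volume := by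
            rw [step1, step2]; exact step3
        _ ≤ x := lintegral_mono_set hsub
    by_contra hxt
    set K : ℝ := max (x.toReal + 1) 1 with hK
    have hK1 : (1:ℝ) ≤ K := le_max_right _ _
    have hK0 : (0:ℝ) < K := lt_of_lt_of_le one_pos hK1
    set b : ℝ := min (d - s) (c / K) with hbdef
    have hb0 : 0 < b := lt_min (sub_pos.mpr hs.2) (by positivity)
    have hbd : s + b ≤ d := by
      have := min_le_left (d - s) (c / K)
      linarith
    have hKb : K ≤ c / b := by
      rw [le_div_iff₀ hb0]
      calc K * b ≤ K * (c / K) := by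
            exact mul_le_mul_of_nonneg_left (min_le_right _ _) (le_of_lt hK0)
        _ = c := by field_simp
    have h1 : ENNReal.ofReal K ≤ x := le_trans (ENNReal.ofReal_le_ofReal hKb) (hb b hb0 hbd)
    have h2 : K ≤ x.toReal := (ENNReal.ofReal_le_iff_le_toReal hxt).mp h1
    have h3 : x.toReal + 1 ≤ K := le_max_left _ _
    linarith
  -- swap integrals
  have hswap : ∫⁻ r in Set.Ioo c d, gfun ρ r ∂volume
      = ∫⁻ s, ∫⁻ r in Set.Ioo c d, G r s ∂volume ∂ρ := by
    have : ∀ r, gfun ρ r = ∫⁻ s, G r s ∂ρ := fun _ => rfl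
    simp_rw [this]
    exact lintegral_lintegral_swap hmeasG.aemeasurable
  have hupper : ∫⁻ r in Set.Ioo c d, gfun ρ r ∂volume < ⊤ := by
    calc ∫⁻ r in Set.Ioo c d, gfun ρ r ∂volume
        ≤ ∫⁻ _ in Set.Ioo c d, ENNReal.ofReal M ∂volume :=
          setLIntegral_mono' measurableSet_Ioo hM
      _ = ENNReal.ofReal M * volume (Set.Ioo c d) := setLIntegral_const _ _
      _ < ⊤ := by
          rw [Real.volume_Ioo]
          exact ENNReal.mul_lt_top ENNReal.ofReal_lt_top ENNReal.ofReal_lt_top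
  have hlower : (⊤ : ℝ≥0∞) ≤ ∫⁻ s, ∫⁻ r in Set.Ioo c d, G r s ∂volume ∂ρ := by
    calc (⊤ : ℝ≥0∞) = ⊤ * ρ (Set.Ioo c d) := (ENNReal.top_mul hpos).symm
      _ = ∫⁻ _ in Set.Ioo c d, (⊤ : ℝ≥0∞) ∂ρ := (setLIntegral_const _ _).symm
      _ = ∫⁻ s in Set.Ioo c d, ∫⁻ r in Set.Ioo c d, G r s ∂volume ∂ρ := by
          refine (setLIntegral_congr_fun measurableSet_Ioo ?_).symm
          intro s hs
          exact key s hs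
      _ ≤ _ := setLIntegral_le_lintegral _ _
  rw [hswap] at hupper
  exact (not_le_of_gt hupper) hlower

lemma gfun_part2 (ρ : Measure ℝ) [IsFiniteMeasure ρ] (hρ : ρ (Set.Iio 0) = 0)
    {c d : ℝ} (hc : 0 < c) (h1 : ρ (Set.Ioo c d) = 0)
    {M : ℝ} (hM : ∀ r ∈ Set.Ioo c d, gfun ρ r ≤ ENNReal.ofReal M) :
    ConvexOn ℝ (Set.Ioo c d) (fun r => (gfun ρ r).toReal) ∧
    (ρ ≠ 0 → StrictConvexOn ℝ (Set.Ioo c d) (fun r => (gfun ρ r).toReal)) := by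
  set F : ℝ → ℝ → ℝ := fun r s => r * (s ^ 2 + 1) / (r - s) ^ 2 with hF
  have hae : ∀ᵐ s ∂ρ, 0 ≤ s ∧ s ∉ Set.Ioo c d := by
    have h2 : ρ (Set.Iio 0 ∪ Set.Ioo c d) = 0 := measure_union_null hρ h1
    rw [ae_iff]
    apply measure_mono_null _ h2
    intro s hs
    simp only [Set.mem_setOf_eq, not_and, not_not] at hs
    by_cases h : 0 ≤ s
    · exact Or.inr (hs h)
    · exact Or.inl (by simpa using lt_of_not_ge h)
  have hr0 : ∀ r ∈ Set.Ioo c d, 0 < r := fun r hr => hc.trans hr.1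
  have hnn : ∀ r ∈ Set.Ioo c d, ∀ s, 0 ≤ F r s := by
    intro r hr s
    exact div_nonneg (mul_nonneg (hr0 r hr).le (by positivity)) (sq_nonneg _)
  have heq : ∀ r ∈ Set.Ioo c d, gfun ρ r = ∫⁻ s, ENNReal.ofReal (F r s) ∂ρ := by
    intro r hr
    apply lintegral_congr_ae
    filter_upwards [hae] with s hs
    have hrs : r - s ≠ 0 := sub_ne_zero.mpr (fun h => hs.2 (h ▸ hr))
    have hden : 0 < (r - s) ^ 2 := by positivity
    exact (ENNReal.ofReal_div_of_pos hden).symm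
  have hmeas : ∀ r, Measurable (F r) := by
    intro r
    apply Measurable.div
    · exact measurable_const.mul ((measurable_id.pow_const 2).add_const 1)
    · exact (measurable_const.sub measurable_id).pow_const 2
  have hint : ∀ r ∈ Set.Ioo c d, Integrable (F r) ρ := by
    intro r hr
    refine ⟨(hmeas r).aestronglyMeasurable, ?_⟩
    rw [hasFiniteIntegral_iff_ofReal (ae_of_all _ (hnn r hr))]
    rw [← heq r hr]
    exact lt_of_le_of_lt (hM r hr) ENNReal.ofReal_lt_top
  have htoReal : ∀ r ∈ Set.Ioo c d, (gfun ρ r).toReal = ∫ s, F r s ∂ρ := by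
    intro r hr
    rw [heq r hr,
      integral_eq_lintegral_of_nonneg_ae (ae_of_all _ (hnn r hr)) (hmeas r).aestronglyMeasurable]
  constructor
  · refine ⟨convex_Ioo c d, ?_⟩
    intro x hx y hy a b ha hb hab
    have hz : a • x + b • y ∈ Set.Ioo c d := (convex_Ioo c d) hx hy ha hb hab
    simp only [smul_eq_mul] at hz ⊢
    rw [htoReal _ hx, htoReal _ hy, htoReal _ hz]
    have hle : ∀ᵐ s ∂ρ, F (a * x + b * y) s ≤ a * F x s + b * F y s := by
      filter_upwards [hae] with s hs
      have := (aux_strictConvex hc hs.1 hs.2).convexOn.2 hx hy ha hb hab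
      simpa using this
    calc ∫ s, F (a * x + b * y) s ∂ρ ≤ ∫ s, (a * F x s + b * F y s) ∂ρ :=
          integral_mono_ae (hint _ hz) (((hint _ hx).const_mul a).add ((hint _ hy).const_mul b)) hle
      _ = a * ∫ s, F x s ∂ρ + b * ∫ s, F y s ∂ρ := by
          rw [integral_add ((hint _ hx).const_mul a) ((hint _ hy).const_mul b),
            integral_const_mul, integral_const_mul]
  · intro hρ0
    refine ⟨convex_Ioo c d, ?_⟩
    intro x hx y hy hxy a b ha hb hab
    have hz : a • x + b • y ∈ Set.Ioo c d := (convex_Ioo c d) hx hy ha.le hb.le hab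
    simp only [smul_eq_mul] at hz ⊢
    rw [htoReal _ hx, htoReal _ hy, htoReal _ hz]
    set h : ℝ → ℝ := fun s => a * F x s + b * F y s - F (a * x + b * y) s with hh
    have hptstrict : ∀ᵐ s ∂ρ, 0 < h s := by
      filter_upwards [hae] with s hs
      have := (aux_strictConvex hc hs.1 hs.2).2 hx hy hxy ha hb hab
      simp only [smul_eq_mul] at this
      simp only [hh]
      linarith
    have hinth : Integrable h ρ :=
      (((hint _ hx).const_mul a).add ((hint _ hy).const_mul b)).sub (hint _ hz)
    have h0 : 0 < ∫ s, h s ∂ρ := by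
      rw [integral_pos_iff_support_of_nonneg_ae
        (by filter_upwards [hptstrict] with s hs; exact hs.le) hinth]
      have hsupp : ρ (Function.support h)ᶜ = 0 := by
        have h3 : ρ {s | ¬ 0 < h s} = 0 := by rw [← ae_iff]; exact hptstrict
        apply measure_mono_null _ h3
        intro s hs
        simp only [Function.mem_support, not_not, Set.mem_compl_iff] at hs
        simp [hs]
      have huniv : ρ Set.univ ≤ ρ (Function.support h) := by
        have h4 := measure_union_le (μ := ρ) (Function.support h) (Function.support h)ᶜ
        rwa [Set.union_compl_self, hsupp, add_zero] at h4
      exact lt_of_lt_of_le (Measure.measure_univ_pos.mpr hρ0) huniv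
    have e1 : ∫ s, h s ∂ρ
        = (a * ∫ s, F x s ∂ρ + b * ∫ s, F y s ∂ρ) - ∫ s, F (a * x + b * y) s ∂ρ := by
      simp only [hh]
      have hintc : Integrable (fun s => a * F x s + b * F y s) ρ :=
        ((hint _ hx).const_mul a).add ((hint _ hy).const_mul b)
      rw [integral_sub hintc (hint _ hz),
        integral_add ((hint _ hx).const_mul a) ((hint _ hy).const_mul b),
        integral_const_mul, integral_const_mul]
    rw [e1] at h0
    linarith

theorem stmt12 (ρ : Measure ℝ) [IsFiniteMeasure ρ] (hρ : ρ (Set.Iio 0) = 0)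
    (c d : ℝ) (hI : closure (Set.Ioo c d) ⊆ Set.Ioi 0)
    (M : ℝ) (hM : ∀ r ∈ Set.Ioo c d, gfun ρ r ≤ ENNReal.ofReal M) :
    ρ (Set.Ioo c d) = 0 ∧
    ConvexOn ℝ (Set.Ioo c d) (fun r => (gfun ρ r).toReal) ∧
    (ρ ≠ 0 → StrictConvexOn ℝ (Set.Ioo c d) (fun r => (gfun ρ r).toReal)) := by
  rcases le_or_gt d c with hdc | hcd
  · have he : Set.Ioo c d = ∅ := Set.Ioo_eq_empty (not_lt.mpr hdc)
    refine ⟨by rw [he]; exact measure_empty, ⟨convex_Ioo c d, ?_⟩,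
      fun _ => ⟨convex_Ioo c d, ?_⟩⟩ <;>
    · intro x hx
      rw [he] at hx
      exact hx.elim
  · have hc : 0 < c := hI (by rw [closure_Ioo hcd.ne]; exact ⟨le_refl c, hcd.le⟩)
    have h1 : ρ (Set.Ioo c d) = 0 := gfun_part1 ρ hc hM
    exact ⟨h1, gfun_part2 ρ hρ hc h1 hM⟩
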